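/- For every x ∈ X and every t ≥ 0 one has 0 ≤ f_0(x) − f_t(x) ≤ (1/2) ∫₀ᵗ ( |∂⁻ f_s|(x) + tilt(f)(x) )² ds; in particular |f_0(x) − f_t(x)| is bounded by the integral on the right-hand side. -/

import Mathlib

/-!
Setting: `(X, d)` is a complete length metric space, `f : X × X → ℝ` is lower
semicontinuous, bounded from below, and satisfies the reverse triangle inequality
`f(x,z) ≥ f(x,y) + f(y,z)`.  For `t > 0` set `F(t,x;y) := f(x,y) + d(x,y)²/(2t)`,
`f_t(x) := inf_y F(t,x;y)`, and `f_0(x) := f(x,x)`.  `D⁺_t(x)` (resp. `D⁻_t(x)`)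
is the largest (resp. smallest) value of `limsup_n d(x,y_n)` (resp. `liminf_n d(x,y_n)`)
among minimizing sequences `(y_n)` of `F(t,x;·)`.
-/

open Filter Topology Metric MeasureTheory
open scoped ENNReal NNReal

noncomputable section

/-- A metric space is a *length space* if the distance between any two points equals the
infimum of the lengths (total variations) of continuous curves joining them. -/
def IsLengthSpace (X : Type*) [MetricSpace X] : Prop :=
  ∀ x y : X,
    ENNReal.ofReal (dist x y) =
      ⨅ γ : { γ : ℝ → X // ContinuousOn γ (Set.Icc 0 1) ∧ γ 0 = x ∧ γ 1 = y },
        eVariationOn γ.1 (Set.Icc 0 1)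

variable {X : Type*} [MetricSpace X]

/-- `FH f t x y = f(x,y) + d(x,y)² / (2t)`. -/
def FH (f : X × X → ℝ) (t : ℝ) (x y : X) : ℝ :=
  f (x, y) + dist x y ^ 2 / (2 * t)

/-- `ft f t x = inf_y (f(x,y) + d(x,y)²/(2t))` for `t ≠ 0`, and `ft f 0 x = f(x,x)`. -/
def ft (f : X × X → ℝ) (t : ℝ) (x : X) : ℝ :=
  if t = 0 then f (x, x) else ⨅ y : X, FH f t x y

/-- `y : ℕ → X` is a minimizing sequence for `F(t,x;·)`. -/
def MinSeq (f : X × X → ℝ) (t : ℝ) (x : X) (y : ℕ → X) : Prop :=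
  Tendsto (fun n => FH f t x (y n)) atTop (𝓝 (ft f t x))

/-- `D⁺_t(x)`: the largest value of `limsup_n d(x, y_n)` among minimizing sequences. -/
def Dplus (f : X × X → ℝ) (t : ℝ) (x : X) : ℝ :=
  sSup { L : ℝ | ∃ y : ℕ → X, MinSeq f t x y ∧
    Filter.limsup (fun n => dist x (y n)) atTop = L }

/-- `D⁻_t(x)`: the smallest value of `liminf_n d(x, y_n)` among minimizing sequences. -/
def Dminus (f : X × X → ℝ) (t : ℝ) (x : X) : ℝ :=
  sInf { L : ℝ | ∃ y : ℕ → X, MinSeq f t x y ∧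
    Filter.liminf (fun n => dist x (y n)) atTop = L }

/-- Descending slope `|∂⁻ g|(x) = limsup_{y→x} (g(y) - g(x))⁻ / d(x,y)`, valued in `[0,∞]`. -/
def descSlope (g : X → ℝ) (x : X) : ℝ≥0∞ :=
  Filter.limsup (fun y => ENNReal.ofReal ((g x - g y) / dist x y)) (𝓝[≠] x)

/-- The tilt `tilt(f)(x) = limsup_{y→x} (f(x,y))⁻ / d(x,y)`, valued in `[0,∞]`. -/
def tilt (f : X × X → ℝ) (x : X) : ℝ≥0∞ :=
  Filter.limsup (fun y => ENNReal.ofReal ((-f (x, y)) / dist x y)) (𝓝[≠] x)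

namespace S4

private lemma eps_le {A B K : ℝ} (hK : 0 ≤ K)
    (h : ∀ ε : ℝ, 0 < ε → ε ≤ 1 → A ≤ B + ε * K) : A ≤ B := by
  by_contra hc
  push_neg at hc
  have hK1 : (0:ℝ) < K + 1 := by linarith
  have h1 : 0 < (A - B) / (2 * (K + 1)) := div_pos (by linarith) (by linarith)
  set ε := min 1 ((A - B) / (2 * (K + 1))) with hεdef
  have hε0 : 0 < ε := lt_min one_pos h1
  have hε1 : ε ≤ 1 := min_le_left _ _
  have h2 := h ε hε0 hε1
  have h3 : ε ≤ (A - B) / (2 * (K + 1)) := min_le_right _ _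
  have h4 : ε * K ≤ (A - B) / (2 * (K + 1)) * K := mul_le_mul_of_nonneg_right h3 hK
  have h5 : (A - B) / (2 * (K + 1)) * K < A - B := by
    rw [div_mul_eq_mul_div, div_lt_iff₀ (by linarith)]
    nlinarith [mul_pos (sub_pos.mpr hc) hK1]
  linarith

variable (f : X × X → ℝ) (x : X) {C : ℝ}

lemma ft_zero : ft f 0 x = f (x, x) := if_pos rfl

lemma ft_of_pos {s : ℝ} (hs : s ≠ 0) : ft f s x = ⨅ y : X, FH f s x y := if_neg hs

lemma FH_lb (hC : ∀ p, C ≤ f p) {s : ℝ} (hs : 0 < s) (y : X) : C ≤ FH f s x y := by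
  have h2 : 0 ≤ dist x y ^ 2 / (2 * s) := by positivity
  have h1 := hC (x, y)
  simp only [FH]; linarith

lemma bddBelow_FH (hC : ∀ p, C ≤ f p) {s : ℝ} (hs : 0 < s) :
    BddBelow (Set.range fun y => FH f s x y) := by
  refine ⟨C, ?_⟩
  rintro _ ⟨y, rfl⟩
  exact FH_lb f x hC hs y

lemma ft_le_FH (hC : ∀ p, C ≤ f p) {s : ℝ} (hs : 0 < s) (y : X) :
    ft f s x ≤ FH f s x y := by
  haveI : Nonempty X := ⟨x⟩
  rw [ft_of_pos f x hs.ne']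
  exact ciInf_le (bddBelow_FH f x hC hs) y

lemma C_le_ft (hC : ∀ p, C ≤ f p) {s : ℝ} (hs : 0 < s) : C ≤ ft f s x := by
  haveI : Nonempty X := ⟨x⟩
  rw [ft_of_pos f x hs.ne']
  exact le_ciInf (FH_lb f x hC hs)

lemma ft_le_ft_zero (hC : ∀ p, C ≤ f p) {s : ℝ} (hs : 0 < s) : ft f s x ≤ ft f 0 x := by
  have h := ft_le_FH f x hC hs x
  rw [ft_zero]
  have h2 : FH f s x x = f (x, x) := by
    simp [FH, dist_self]
  linarith

lemma exists_min (hC : ∀ p, C ≤ f p) {s : ℝ} (hs : 0 < s) {ε : ℝ} (hε : 0 < ε) :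
    ∃ y, FH f s x y ≤ ft f s x + ε := by
  haveI : Nonempty X := ⟨x⟩
  have h : (⨅ y : X, FH f s x y) < ft f s x + ε := by
    rw [← ft_of_pos f x hs.ne']; linarith
  obtain ⟨y, hy⟩ := exists_lt_of_ciInf_lt h
  exact ⟨y, hy.le⟩

def mm (f : X × X → ℝ) (s : ℝ) (x : X) (ε : ℝ) : ℝ :=
  sInf {r : ℝ | ∃ y, FH f s x y ≤ ft f s x + ε ∧ dist x y = r}

lemma mm_nonneg (s ε : ℝ) : 0 ≤ mm f s x ε :=
  Real.sInf_nonneg (by rintro r ⟨y, _, rfl⟩; exact dist_nonneg)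

private lemma mm_bddBelow (s ε : ℝ) :
    BddBelow {r : ℝ | ∃ y, FH f s x y ≤ ft f s x + ε ∧ dist x y = r} :=
  ⟨0, by rintro r ⟨y, _, rfl⟩; exact dist_nonneg⟩

lemma mm_le {s ε : ℝ} {y : X} (hy : FH f s x y ≤ ft f s x + ε) :
    mm f s x ε ≤ dist x y :=
  csInf_le (mm_bddBelow f x s ε) ⟨y, hy, rfl⟩

lemma mm_anti (hC : ∀ p, C ≤ f p) {s : ℝ} (hs : 0 < s) {ε ε' : ℝ} (hε : 0 < ε)
    (h : ε ≤ ε') : mm f s x ε' ≤ mm f s x ε := by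
  apply csInf_le_csInf (mm_bddBelow f x s ε')
  · obtain ⟨y, hy⟩ := exists_min f x hC hs hε
    exact ⟨dist x y, y, hy, rfl⟩
  · rintro r ⟨y, hy, rfl⟩
    exact ⟨y, hy.trans (by linarith), rfl⟩

lemma exists_mm (hC : ∀ p, C ≤ f p) {s : ℝ} (hs : 0 < s) {ε θ : ℝ} (hε : 0 < ε)
    (hθ : 0 < θ) :
    ∃ y, FH f s x y ≤ ft f s x + ε ∧ dist x y < mm f s x ε + θ := by
  have hne : Set.Nonempty {r : ℝ | ∃ y, FH f s x y ≤ ft f s x + ε ∧ dist x y = r} := by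
    obtain ⟨y, hy⟩ := exists_min f x hC hs hε
    exact ⟨dist x y, y, hy, rfl⟩
  have hlt : sInf {r : ℝ | ∃ y, FH f s x y ≤ ft f s x + ε ∧ dist x y = r} <
      mm f s x ε + θ := by
    have : mm f s x ε < mm f s x ε + θ := by linarith
    exact this
  obtain ⟨r, ⟨y, hy, rfl⟩, hr⟩ := (csInf_lt_iff (mm_bddBelow f x s ε) hne).mp hlt
  exact ⟨y, hy, hr⟩

def DD (f : X × X → ℝ) (s : ℝ) (x : X) : ℝ :=
  sSup {r : ℝ | ∃ ε : ℝ, 0 < ε ∧ ε ≤ 1 ∧ mm f s x ε = r}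

lemma dist_sq_le (hC : ∀ p, C ≤ f p) {s : ℝ} (hs : 0 < s) {ε : ℝ} {y : X}
    (hy : FH f s x y ≤ ft f s x + ε) :
    dist x y ^ 2 ≤ 2 * s * (ft f 0 x + ε - C) := by
  have h1 := hC (x, y)
  have h2 := ft_le_ft_zero f x hC hs
  have h3 : C + dist x y ^ 2 / (2 * s) ≤ ft f 0 x + ε := by
    simp only [FH] at hy; linarith
  have h4 : dist x y ^ 2 / (2 * s) ≤ ft f 0 x + ε - C := by linarith
  rw [div_le_iff₀ (by positivity)] at h4
  nlinarith

lemma mm_bdd (hC : ∀ p, C ≤ f p) {s : ℝ} (hs : 0 < s) {ε : ℝ} (hε : 0 < ε)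
    (hε1 : ε ≤ 1) :
    mm f s x ε ≤ Real.sqrt (2 * s * (ft f 0 x + 1 - C)) := by
  obtain ⟨y, hy⟩ := exists_min f x hC hs hε
  refine (mm_le f x hy).trans ?_
  have h1 : dist x y ^ 2 ≤ 2 * s * (ft f 0 x + 1 - C) := by
    have := dist_sq_le f x hC hs hy
    nlinarith
  calc dist x y = Real.sqrt (dist x y ^ 2) := (Real.sqrt_sq dist_nonneg).symm
    _ ≤ _ := Real.sqrt_le_sqrt h1

private lemma DD_bddAbove (hC : ∀ p, C ≤ f p) {s : ℝ} (hs : 0 < s) :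
    BddAbove {r : ℝ | ∃ ε : ℝ, 0 < ε ∧ ε ≤ 1 ∧ mm f s x ε = r} := by
  refine ⟨Real.sqrt (2 * s * (ft f 0 x + 1 - C)), ?_⟩
  rintro r ⟨ε, hε, hε1, rfl⟩
  exact mm_bdd f x hC hs hε hε1

lemma mm_le_DD (hC : ∀ p, C ≤ f p) {s : ℝ} (hs : 0 < s) {ε : ℝ} (hε : 0 < ε) :
    mm f s x ε ≤ DD f s x := by
  rcases le_or_gt ε 1 with h | h
  · exact le_csSup (DD_bddAbove f x hC hs) ⟨ε, hε, h, rfl⟩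
  · exact (mm_anti f x hC hs one_pos h.le).trans
      (le_csSup (DD_bddAbove f x hC hs) ⟨1, one_pos, le_rfl, rfl⟩)

lemma DD_nonneg (hC : ∀ p, C ≤ f p) {s : ℝ} (hs : 0 < s) : 0 ≤ DD f s x :=
  (mm_nonneg f x s 1).trans (mm_le_DD f x hC hs one_pos)

lemma DD_le (hC : ∀ p, C ≤ f p) {s : ℝ} (hs : 0 < s) {B : ℝ}
    (h : ∀ ε : ℝ, 0 < ε → ε ≤ 1 → mm f s x ε ≤ B) : DD f s x ≤ B := by
  refine csSup_le ⟨mm f s x 1, 1, one_pos, le_rfl, rfl⟩ ?_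
  rintro r ⟨ε, h1, h2, rfl⟩
  exact h ε h1 h2

lemma exists_DD (hC : ∀ p, C ≤ f p) {s : ℝ} (hs : 0 < s) {θ : ℝ} (hθ : 0 < θ) :
    ∃ ε : ℝ, 0 < ε ∧ ε ≤ 1 ∧ DD f s x - θ < mm f s x ε := by
  by_contra h
  push_neg at h
  have := DD_le f x hC hs h
  linarith

end S4

open Filter Topology Metric MeasureTheory Set
open scoped ENNReal NNReal

namespace S4
variable {X : Type*} [MetricSpace X] (f : X × X → ℝ) (x : X) {C : ℝ}

lemma gap_le (hC : ∀ p, C ≤ f p) {s t : ℝ} (hs : 0 < s) (hst : s < t) :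
    ft f s x ≤ ft f t x + DD f t x ^ 2 * (1/(2*s) - 1/(2*t)) := by
  have ht : 0 < t := hs.trans hst
  have hΔ : 0 ≤ 1/(2*s) - 1/(2*t) := by
    have : 1/(2*t) ≤ 1/(2*s) := by
      apply one_div_le_one_div_of_le (by linarith) (by linarith)
    linarith
  have hD := DD_nonneg f x hC ht
  apply eps_le (K := (2*DD f t x + 1)*(1/(2*s) - 1/(2*t)) + 1) (by positivity)
  intro ε hε hε1
  obtain ⟨y, hy, hyd⟩ := exists_mm f x hC ht hε hε
  have hd1 : dist x y < DD f t x + ε := hyd.trans_le (by linarith [mm_le_DD f x hC ht hε])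
  have h1 : ft f s x ≤ FH f s x y := ft_le_FH f x hC hs y
  have h2 : FH f s x y = FH f t x y + dist x y^2 * (1/(2*s) - 1/(2*t)) := by
    simp only [FH]
    field_simp
    ring
  have h3 : dist x y^2 ≤ (DD f t x + ε)^2 := by nlinarith [dist_nonneg (x := x) (y := y)]
  have h4 : dist x y^2*(1/(2*s)-1/(2*t)) ≤ (DD f t x + ε)^2 * (1/(2*s)-1/(2*t)) :=
    mul_le_mul_of_nonneg_right h3 hΔ
  nlinarith [mul_nonneg (mul_nonneg hε.le hΔ) (sub_nonneg.mpr hε1)]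

lemma DD_mono (hC : ∀ p, C ≤ f p) {s t : ℝ} (hs : 0 < s) (hst : s < t) :
    DD f s x ≤ DD f t x := by
  have ht : 0 < t := hs.trans hst
  have hts : 0 < t - s := by linarith
  have hDs := DD_nonneg f x hC hs
  have hDt := DD_nonneg f x hC ht
  have hq4 : 0 ≤ 4*s*t/(t-s) := div_nonneg (by nlinarith) hts.le
  have key : ∀ ε : ℝ, 0 < ε → ε ≤ 1 →
      DD f s x ^ 2 ≤ DD f t x ^2 + ε * (2*DD f t x + 1 + 4*s*t/(t-s)) := by
    intro ε hε hε1
    obtain ⟨yt, hyt, hytd⟩ := exists_mm f x hC ht hε hε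
    have hdt : dist x yt ≤ DD f t x + ε := by linarith [mm_le_DD f x hC ht hε]
    have hG : ∀ ε'' : ℝ, 0 < ε'' → ε'' ≤ 1 →
        mm f s x ε'' ≤ Real.sqrt ((DD f t x + ε)^2 + 4*ε*s*t/(t-s)) := by
      intro ε'' h1 h2
      have hε2p : 0 < min ε ε'' := lt_min hε h1
      obtain ⟨ys, hys⟩ := exists_min f x hC hs hε2p
      have hys' : FH f s x ys ≤ ft f s x + ε'' := hys.trans (by linarith [min_le_right ε ε''])
      have hysε : FH f s x ys ≤ ft f s x + ε := hys.trans (by linarith [min_le_left ε ε''])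
      have c1 : ft f s x ≤ FH f s x yt := ft_le_FH f x hC hs yt
      have c2 : ft f t x ≤ FH f t x ys := ft_le_FH f x hC ht ys
      have e1 : f (x, ys) + dist x ys^2/(2*s) ≤ f (x, yt) + dist x yt^2/(2*s) + ε := by
        have h5 : FH f s x ys ≤ FH f s x yt + ε := hysε.trans (by linarith)
        simp only [FH] at h5; linarith
      have e2 : f (x, yt) + dist x yt^2/(2*t) ≤ f (x, ys) + dist x ys^2/(2*t) + ε := by
        have h5 : FH f t x yt ≤ FH f t x ys + ε := hyt.trans (by linarith)
        simp only [FH] at h5; linarith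
      have e3 : dist x ys^2 ≤ dist x yt^2 + 4*ε*s*t/(t-s) := by
        have hid : ∀ u : ℝ, u/(2*s) - u/(2*t) = u * ((t-s)/(2*s*t)) := by
          intro u; field_simp
        have h5 : (dist x ys^2 - dist x yt^2) * ((t-s)/(2*s*t)) ≤ 2*ε := by
          have := hid (dist x ys^2)
          have := hid (dist x yt^2)
          nlinarith [e1, e2]
        have hq : 0 < (t-s)/(2*s*t) := div_pos hts (by positivity)
        have h6 : dist x ys^2 - dist x yt^2 ≤ 2*ε / ((t-s)/(2*s*t)) := by
          rw [le_div_iff₀ hq]; linarith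
        have h7 : 2*ε / ((t-s)/(2*s*t)) = 4*ε*s*t/(t-s) := by
          field_simp; ring
        linarith [h6, h7.symm.le, h7.le]
      have e4 : dist x yt^2 ≤ (DD f t x + ε)^2 := by
        nlinarith [dist_nonneg (x := x) (y := yt)]
      calc mm f s x ε'' ≤ dist x ys := mm_le f x hys'
        _ = Real.sqrt (dist x ys^2) := (Real.sqrt_sq dist_nonneg).symm
        _ ≤ _ := Real.sqrt_le_sqrt (by linarith)
    have hDs_le := DD_le f x hC hs hG
    have harg : 0 ≤ (DD f t x + ε)^2 + 4*ε*s*t/(t-s) := by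
      have : 0 ≤ 4*ε*s*t/(t-s) := div_nonneg (by positivity) hts.le
      nlinarith
    have hsq := Real.sq_sqrt harg
    have h6 : DD f s x^2 ≤ (DD f t x + ε)^2 + 4*ε*s*t/(t-s) := by
      nlinarith [Real.sqrt_nonneg ((DD f t x + ε)^2 + 4*ε*s*t/(t-s))]
    have h8 : 4*ε*s*t/(t-s) = ε * (4*s*t/(t-s)) := by
      field_simp
    nlinarith [h6]
  have h8 := eps_le (by nlinarith : (0:ℝ) ≤ 2*DD f t x + 1 + 4*s*t/(t-s)) key
  exact (pow_le_pow_iff_left₀ hDs hDt two_ne_zero).mp h8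

lemma ft_cont0 (hC : ∀ p, C ≤ f p) (hlsc : LowerSemicontinuous f) {ε : ℝ} (hε : 0 < ε) :
    ∃ σ : ℝ, 0 < σ ∧ ∀ s : ℝ, 0 < s → s ≤ σ → ft f 0 x - ft f s x ≤ ε := by
  haveI : Nonempty X := ⟨x⟩
  have hb : f (x,x) - ε < f (x,x) := by linarith
  have hev : ∀ᶠ p in 𝓝 (x, x), f (x,x) - ε < f p := hlsc (x, x) _ hb
  obtain ⟨r, hr, hball⟩ := Metric.eventually_nhds_iff.mp hev
  have hfxC : C ≤ f (x,x) := hC _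
  set σ := r^2/(2*(f (x,x) - C + 1)) with hσ
  have hσpos : 0 < σ := div_pos (by positivity) (by linarith)
  refine ⟨σ, hσpos, ?_⟩
  intro s hs hsσ
  rw [ft_zero, ft_of_pos f x hs.ne']
  have hlow : ∀ y : X, f (x,x) - ε ≤ FH f s x y := by
    intro y
    rcases lt_or_ge (dist x y) r with h | h
    · have hd : dist ((x, y) : X × X) (x, x) < r := by
        rw [Prod.dist_eq]
        simp only [dist_self]
        rw [max_comm, max_eq_left dist_nonneg, dist_comm]
        exact h
      have h1 := hball hd
      have h2 : 0 ≤ dist x y^2/(2*s) := by positivity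
      simp only [FH]; linarith
    · have h2 : r^2/(2*σ) = f (x,x) - C + 1 := by
        rw [hσ]; field_simp
      have h3 : r^2/(2*σ) ≤ r^2/(2*s) :=
        div_le_div_of_nonneg_left (by positivity) (by linarith) (by linarith)
      have h4 : r^2/(2*s) ≤ dist x y^2/(2*s) := by
        apply div_le_div_of_nonneg_right ?_ (by linarith)
        · nlinarith
      have h5 := hC (x, y)
      simp only [FH]; linarith
  have := le_ciInf hlow
  linarith

lemma length_point (hX : IsLengthSpace X) {x y : X} {δ η : ℝ} (hδ : 0 < δ)
    (hδd : δ < dist x y) (hη : 0 < η) :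
    ∃ z : X, dist x z = δ ∧ dist z y ≤ dist x y - δ + η := by
  have h0 : (0:ℝ) ≤ dist x y := dist_nonneg
  have hlt : ENNReal.ofReal (dist x y) < ENNReal.ofReal (dist x y + η) := by
    rw [ENNReal.ofReal_lt_ofReal_iff (by linarith)]; linarith
  rw [hX x y] at hlt
  obtain ⟨γ, hγ⟩ := iInf_lt_iff.mp hlt
  obtain ⟨hcont, hγ0, hγ1⟩ := γ.2
  have hψ : ContinuousOn (fun c => dist x (γ.1 c)) (Set.Icc 0 1) :=
    (continuous_const.dist continuous_id).comp_continuousOn hcont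
  have hδmem : δ ∈ Set.Icc (dist x (γ.1 0)) (dist x (γ.1 1)) := by
    rw [hγ0, hγ1, dist_self]
    exact ⟨hδ.le, hδd.le⟩
  obtain ⟨c, hc, hcd⟩ := intermediate_value_Icc zero_le_one hψ hδmem
  have hc0 : (0:ℝ) ≤ c := hc.1
  have hc1 : c ≤ 1 := hc.2
  have hsplit := eVariationOn.Icc_add_Icc γ.1 hc0 hc1 hc (s := Set.Icc (0:ℝ) 1)
  rw [Set.inter_eq_self_of_subset_right (Set.Icc_subset_Icc le_rfl hc1),
    Set.inter_eq_self_of_subset_right (Set.Icc_subset_Icc hc0 le_rfl),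
    Set.inter_self] at hsplit
  have hcd' : dist x (γ.1 c) = δ := hcd
  have h1 : ENNReal.ofReal δ ≤ eVariationOn γ.1 (Set.Icc 0 c) := by
    have h := eVariationOn.edist_le γ.1 (Set.left_mem_Icc.mpr hc0) (Set.right_mem_Icc.mpr hc0)
    rw [hγ0, edist_dist] at h
    rwa [← hcd']
  have h2 : ENNReal.ofReal (dist (γ.1 c) y) ≤ eVariationOn γ.1 (Set.Icc c 1) := by
    have h := eVariationOn.edist_le γ.1 (Set.left_mem_Icc.mpr hc1) (Set.right_mem_Icc.mpr hc1)
    rw [edist_dist, hγ1] at h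
    exact h
  have h3 : ENNReal.ofReal δ + ENNReal.ofReal (dist (γ.1 c) y) <
      ENNReal.ofReal (dist x y + η) :=
    lt_of_le_of_lt (add_le_add h1 h2) (by rw [hsplit]; exact hγ)
  rw [← ENNReal.ofReal_add hδ.le dist_nonneg] at h3
  have h4 := (ENNReal.ofReal_lt_ofReal_iff_of_nonneg (by positivity)).mp h3
  exact ⟨γ.1 c, hcd', by linarith⟩

end S4

namespace S4
section SlopeBound
variable {X : Type*} [MetricSpace X] (f : X × X → ℝ) (x : X) {C : ℝ}

set_option maxHeartbeats 1000000 in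
lemma slope_bound_core (hX : IsLengthSpace X) (hC : ∀ p, C ≤ f p)
    (hrev : ∀ a b c : X, f (a, b) + f (b, c) ≤ f (a, c)) {s : ℝ} (hs : 0 < s)
    {θ : ℝ} (hθp : 0 < θ) :
    ENNReal.ofReal ((DD f s x - θ)/s) ≤ descSlope (fun z => ft f s z) x + tilt f x := by
  set S := descSlope (fun z => ft f s z) x + tilt f x with hS
  rcases le_or_gt (DD f s x - θ) 0 with hneg | hpos
  · rw [ENNReal.ofReal_eq_zero.mpr (div_nonpos_of_nonpos_of_nonneg hneg hs.le)]
    exact zero_le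
  set d := DD f s x with hd
  have hD0 : 0 ≤ d := DD_nonneg f x hC hs
  have hθd : θ < d := by linarith
  obtain ⟨ε₀, hε₀p, hε₀1, hε₀⟩ := exists_DD f x hC hs (show 0 < θ/4 by linarith)
  by_contra hcon
  push_neg at hcon
  set v := ENNReal.ofReal ((d - θ)/s) with hv
  have hvfin : v ≠ ⊤ := ENNReal.ofReal_ne_top
  set a := descSlope (fun z => ft f s z) x with ha
  set b := tilt f x with hb
  have haS : a ≤ S := le_self_add
  have hbS : b ≤ S := le_add_self
  have hafin : a ≠ ⊤ := ((haS.trans_lt hcon).trans_le le_top).ne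
  have hbfin : b ≠ ⊤ := ((hbS.trans_lt hcon).trans_le le_top).ne
  have hδe : (0:ℝ≥0∞) < v - S := tsub_pos_of_lt hcon
  have hhalf : ((v - S)/2 : ℝ≥0∞) ≠ 0 := (ENNReal.div_pos hδe.ne' (by norm_num)).ne'
  have hev1 : ∀ᶠ z in nhdsWithin x {x}ᶜ,
      ENNReal.ofReal ((ft f s x - ft f s z)/dist x z) < a + (v - S)/2 := by
    apply Filter.eventually_lt_of_limsup_lt (ENNReal.lt_add_right hafin hhalf)
  have hev2 : ∀ᶠ z in nhdsWithin x {x}ᶜ,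
      ENNReal.ofReal ((-f (x, z))/dist x z) < b + (v - S)/2 := by
    apply Filter.eventually_lt_of_limsup_lt (ENNReal.lt_add_right hbfin hhalf)
  have hsum : ∀ᶠ z in nhdsWithin x {x}ᶜ,
      ENNReal.ofReal ((ft f s x - ft f s z)/dist x z)
        + ENNReal.ofReal ((-f (x, z))/dist x z) < v := by
    filter_upwards [hev1, hev2] with z h1 h2
    have h3 := ENNReal.add_lt_add h1 h2
    have h4 : (a + (v - S)/2) + (b + (v - S)/2) = v := by
      have h5 : (v-S)/2 + (v-S)/2 = v - S := ENNReal.add_halves _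
      have h6 : S + (v - S) = v := add_tsub_cancel_of_le hcon.le
      calc (a + (v - S)/2) + (b + (v - S)/2) = (a + b) + ((v-S)/2 + (v-S)/2) := by ring
        _ = S + (v - S) := by rw [h5, hS]
        _ = v := h6
    rwa [h4] at h3
  rw [eventually_nhdsWithin_iff] at hsum
  obtain ⟨r, hr, hball⟩ := Metric.eventually_nhds_iff.mp hsum
  -- construct the contradicting point
  set M := d + s + 2 with hM
  have hMpos : 0 < M := by linarith
  have hdq : 0 < d - θ/4 := by linarith
  set δ := min (r/2) (min (1/2) (min (θ/(8*M)) ((d - θ/4)/2))) with hδdef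
  have hδp : 0 < δ :=
    lt_min (by linarith) (lt_min (by norm_num) (lt_min (by positivity) (by linarith)))
  have hδr : δ < r := (min_le_left _ _).trans_lt (by linarith)
  have hδhalf : δ ≤ 1/2 := (min_le_right _ _).trans (min_le_left _ _)
  have hδM : δ ≤ θ/(8*M) := (min_le_right _ _).trans ((min_le_right _ _).trans (min_le_left _ _))
  have hδd4 : δ ≤ (d - θ/4)/2 := (min_le_right _ _).trans ((min_le_right _ _).trans (min_le_right _ _))
  set ε := min ε₀ (δ^2) with hεdef
  have hεp : 0 < ε := lt_min hε₀p (by positivity)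
  have hεδ : ε ≤ δ^2 := min_le_right _ _
  obtain ⟨y, hy⟩ := exists_min f x hC hs hεp
  have hmmy : mm f s x ε ≤ dist x y := mm_le f x hy
  have hmm0 : mm f s x ε₀ ≤ mm f s x ε := mm_anti f x hC hs hεp (min_le_left _ _)
  have hdy : d - θ/4 < dist x y := lt_of_lt_of_le hε₀ (le_trans hmm0 hmmy)
  have hδdy : δ < dist x y := by linarith
  obtain ⟨z, hz1, hz2⟩ := length_point hX hδp hδdy (show 0 < δ^2 by positivity)
  have hzx : z ≠ x := by
    intro h
    rw [h, dist_self] at hz1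
    exact hδp.ne hz1
  -- key estimates
  have key1 : ft f s z ≤ f (x, y) - f (x, z) + dist z y^2/(2*s) := by
    have h1 : ft f s z ≤ FH f s z y := ft_le_FH f z hC hs y
    have h2 : f (x, z) + f (z, y) ≤ f (x, y) := hrev x z y
    simp only [FH] at h1
    linarith
  have key2 : f (x, y) + dist x y^2/(2*s) - ε ≤ ft f s x := by
    simp only [FH] at hy
    linarith
  have hdzy : dist z y^2 ≤ (dist x y - δ + δ^2)^2 := by
    nlinarith [dist_nonneg (x := z) (y := y), hz2]
  have hu : ft f s x - ft f s z - f (x, z) ≥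
      (dist x y^2 - (dist x y - δ + δ^2)^2)/(2*s) - ε := by
    have h3 : (dist x y^2 - dist z y^2)/(2*s) ≥
        (dist x y^2 - (dist x y - δ + δ^2)^2)/(2*s) := by
      apply div_le_div_of_nonneg_right ?_ (by linarith)
      · linarith
    have h4 : ft f s x - ft f s z ≥ f (x, z) + (dist x y^2 - dist z y^2)/(2*s) - ε := by
      have h5 : (dist x y^2 - dist z y^2)/(2*s) = dist x y^2/(2*s) - dist z y^2/(2*s) := by
        ring
      rw [h5]
      linarith
    linarith
  have expand : dist x y^2 - (dist x y - δ + δ^2)^2 ≥ δ*(1-δ)*(2*dist x y - δ) := by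
    have hid : dist x y^2 - (dist x y - δ + δ^2)^2 - δ*(1-δ)*(2*dist x y - δ)
        = δ^3*(1-δ) := by ring
    have hnn : 0 ≤ δ^3*(1-δ) := mul_nonneg (pow_nonneg hδp.le 3) (by linarith)
    linarith
  have hδM' : δ * (8*M) ≤ θ := by
    rw [← le_div_iff₀ (by positivity)]
    exact hδM
  have hstep : (1-δ)*(2*dist x y - δ) - 2*s*δ ≥ 2*d - θ := by
    have hw : 2*(d - θ/4) - δ ≤ 2*dist x y - δ := by linarith
    have hmul : (1-δ)*(2*(d - θ/4)-δ) ≤ (1-δ)*(2*dist x y-δ) :=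
      mul_le_mul_of_nonneg_left hw (by linarith)
    have hδM2 : δ*(8*(d+s+2)) ≤ θ := by rw [show d+s+2 = M from hM.symm]; exact hδM'
    have hexp : (1-δ)*(2*(d - θ/4)-δ)
        = 2*d - θ/2 - δ - 2*(δ*d) + (δ*θ)/2 + δ*δ := by ring
    have hexp2 : δ*(8*(d+s+2)) = 8*(δ*d) + 8*(δ*s) + 16*δ := by ring
    have p1 : 0 ≤ δ*d := mul_nonneg hδp.le hD0
    have p2 : 0 ≤ δ*s := mul_nonneg hδp.le hs.le
    have p3 : 0 ≤ δ*θ := mul_nonneg hδp.le hθp.le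
    have p4 : 0 ≤ δ*δ := mul_nonneg hδp.le hδp.le
    linarith
  have hmain : ft f s x - ft f s z - f (x, z) ≥ δ * ((d - θ/2)/s) := by
    have h6 : δ*(1-δ)*(2*dist x y - δ)/(2*s) ≥ δ*(2*d - θ + 2*s*δ)/(2*s) := by
      apply div_le_div_of_nonneg_right ?_ (by linarith)
      · have := mul_le_mul_of_nonneg_left hstep hδp.le
        calc δ*(2*d - θ + 2*s*δ) = δ*((2*d - θ) + 2*s*δ) := by ring
          _ ≤ δ*(((1-δ)*(2*dist x y - δ) - 2*s*δ) + 2*s*δ) := by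
              apply mul_le_mul_of_nonneg_left ?_ hδp.le
              linarith [hstep]
          _ = δ*(1-δ)*(2*dist x y - δ) := by ring
    have h7 : δ*(2*d - θ + 2*s*δ)/(2*s) = δ*((d - θ/2)/s) + δ^2 := by
      field_simp
    have h8 : (dist x y^2 - (dist x y - δ + δ^2)^2)/(2*s) ≥ δ*(1-δ)*(2*dist x y - δ)/(2*s) := by
      apply div_le_div_of_nonneg_right ?_ (by linarith)
      · linarith [expand]
    linarith [hu, h6, h8, h7]
  -- derive the contradiction
  have hdistzx : dist z x < r := by
    rw [dist_comm, hz1]; exact hδr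
  have hballz := hball hdistzx (by simpa using hzx)
  have hge : v ≤ ENNReal.ofReal ((ft f s x - ft f s z)/dist x z)
      + ENNReal.ofReal ((-f (x, z))/dist x z) := by
    refine le_trans ?_ ENNReal.ofReal_add_le
    rw [← add_div]
    apply ENNReal.ofReal_le_ofReal
    rw [hz1]
    have h9 : (d - θ/2)/s ≤ (ft f s x - ft f s z + -f (x, z))/δ := by
      rw [le_div_iff₀ hδp]
      calc (d - θ/2)/s * δ = δ * ((d - θ/2)/s) := by ring
        _ ≤ _ := by linarith [hmain]
    have h10 : (d - θ)/s ≤ (d - θ/2)/s := by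
      apply div_le_div_of_nonneg_right ?_ hs.le
      · linarith
    linarith
  exact absurd hballz (not_lt.mpr hge)

end SlopeBound
end S4

namespace S4
section Darboux
variable {X : Type*} [MetricSpace X] (f : X × X → ℝ) (x : X) {C : ℝ}

private lemma darboux_term {a b σ tt Δ Da Db Dt : ℝ} (hσ : 0 < σ) (hσa : σ ≤ a)
    (hab : a < b) (hbt : b ≤ tt) (hΔ : Δ = b - a) (h0 : 0 ≤ Da) (hDab : Da ≤ Db)
    (hDbt : Db ≤ Dt) :
    Db^2 * (1/(2*a) - 1/(2*b)) ≤
      Da^2 * Δ/(2*b^2) + (Db^2 - Da^2)*Δ/(2*σ^2) + Dt^2*Δ^2/(2*σ^3) := by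
  have ha : 0 < a := lt_of_lt_of_le hσ hσa
  have hb : 0 < b := ha.trans hab
  have hσb : σ ≤ b := hσa.trans hab.le
  have hΔp : 0 < Δ := by rw [hΔ]; linarith
  have hid : 1/(2*a) - 1/(2*b) = Δ/(2*a*b) := by rw [hΔ]; field_simp
  rw [hid]
  have hab2 : σ^2 ≤ a*b := by nlinarith
  have hsq1 : Da^2 ≤ Db^2 := by nlinarith
  have h1 : (Db^2 - Da^2)*Δ/(2*a*b) ≤ (Db^2 - Da^2)*Δ/(2*σ^2) := by
    apply div_le_div_of_nonneg_left (mul_nonneg (by linarith) hΔp.le) (by positivity)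
      (by nlinarith)
  have hidd : Da^2*Δ/(2*a*b) = Da^2*Δ/(2*b^2) + Da^2*Δ^2/(2*a*b^2) := by
    rw [hΔ]; field_simp; ring
  have hsq2 : Da^2*Δ^2 ≤ Dt^2*Δ^2 := by
    have : Da^2 ≤ Dt^2 := by nlinarith
    exact mul_le_mul_of_nonneg_right this (sq_nonneg Δ)
  have h2 : Da^2*Δ^2/(2*a*b^2) ≤ Dt^2*Δ^2/(2*σ^3) := by
    apply div_le_div₀ (by positivity) hsq2 (by positivity) (by nlinarith)
  have hsplit : Db^2*(Δ/(2*a*b)) = Da^2*Δ/(2*a*b) + (Db^2-Da^2)*Δ/(2*a*b) := by ring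
  linarith

lemma DD_mono' (hC : ∀ p, C ≤ f p) {s t : ℝ} (hs : 0 < s) (hst : s ≤ t) :
    DD f s x ≤ DD f t x := by
  rcases eq_or_lt_of_le hst with rfl | h
  · exact le_rfl
  · exact DD_mono f x hC hs h

set_option maxHeartbeats 1000000 in
lemma darboux (hC : ∀ p, C ≤ f p) {σ tt : ℝ} (hσ : 0 < σ) (hσt : σ < tt) :
    ENNReal.ofReal (ft f σ x - ft f tt x) ≤
      ∫⁻ s in Set.Ioc σ tt, ENNReal.ofReal (DD f s x^2/(2*s^2)) := by
  set g : ℝ → ℝ≥0∞ := fun s => ENNReal.ofReal (DD f s x^2/(2*s^2)) with hg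
  have htt : 0 < tt := hσ.trans hσt
  have hDt := DD_nonneg f x hC htt
  apply ENNReal.le_of_forall_pos_le_add
  intro ρ hρ _
  have hρR : (0:ℝ) < (ρ:ℝ) := hρ
  set K := DD f tt x^2/(2*σ^2) + (tt-σ)*DD f tt x^2/(2*σ^3) with hK
  have hK0 : 0 ≤ K := by
    have k1 : 0 ≤ DD f tt x^2/(2*σ^2) := by positivity
    have k2 : 0 ≤ (tt-σ)*DD f tt x^2/(2*σ^3) := by
      apply div_nonneg ?_ (by positivity)
      · apply mul_nonneg (by linarith) (sq_nonneg _)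
    rw [hK]; linarith
  obtain ⟨n, hn⟩ := exists_nat_gt ((tt - σ)*K/(ρ:ℝ))
  have hn0 : 0 < n := by
    by_contra h
    push_neg at h
    interval_cases n
    · simp at hn
      have : 0 ≤ (tt - σ)*K/(ρ:ℝ) := div_nonneg (mul_nonneg (by linarith) hK0) hρR.le
      linarith
  have hnR : (0:ℝ) < (n:ℝ) := by exact_mod_cast hn0
  set Δ := (tt - σ)/n with hΔdef
  have hΔp : 0 < Δ := div_pos (by linarith) hnR
  set p : ℕ → ℝ := fun i => σ + i*Δ with hp
  have hp0 : p 0 = σ := by simp [hp]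
  have hpn : p n = tt := by
    simp only [hp, hΔdef]
    field_simp
    ring
  have hpmono : ∀ i : ℕ, p i < p (i+1) := by
    intro i
    simp only [hp]
    push_cast
    nlinarith [hΔp]
  have hpσ : ∀ i : ℕ, σ ≤ p i := by
    intro i
    simp only [hp]
    have : 0 ≤ (i:ℝ)*Δ := mul_nonneg (Nat.cast_nonneg i) hΔp.le
    linarith
  have hppos : ∀ i : ℕ, 0 < p i := fun i => lt_of_lt_of_le hσ (hpσ i)
  have hple : ∀ i : ℕ, i ≤ n → p i ≤ tt := by
    intro i hi
    rw [← hpn]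
    simp only [hp]
    have : (i:ℝ) ≤ (n:ℝ) := by exact_mod_cast hi
    nlinarith [hΔp]
  have hΔeq : ∀ i : ℕ, Δ = p (i+1) - p i := by
    intro i
    simp only [hp]
    push_cast
    ring
  -- real estimate
  have sum_eq : ft f σ x - ft f tt x =
      ∑ i ∈ Finset.range n, (ft f (p i) x - ft f (p (i+1)) x) := by
    rw [Finset.sum_range_sub' (fun i => ft f (p i) x) n, hp0, hpn]
  have term_le : ∀ i ∈ Finset.range n,
      ft f (p i) x - ft f (p (i+1)) x ≤
        DD f (p i) x^2*Δ/(2*(p (i+1))^2)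
        + (DD f (p (i+1)) x^2 - DD f (p i) x^2)*Δ/(2*σ^2)
        + DD f tt x^2*Δ^2/(2*σ^3) := by
    intro i hi
    have hi' : i < n := Finset.mem_range.mp hi
    have h1 := gap_le f x hC (hppos i) (hpmono i)
    have hDa0 := DD_nonneg f x hC (hppos i)
    have hDab := DD_mono f x hC (hppos i) (hpmono i)
    have hDbt : DD f (p (i+1)) x ≤ DD f tt x :=
      DD_mono' f x hC (hppos (i+1)) (hple (i+1) hi')
    have h2 := darboux_term hσ (hpσ i) (hpmono i) (hple (i+1) hi') (hΔeq i)
      hDa0 hDab hDbt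
    linarith
  have tele : ∑ i ∈ Finset.range n,
      (DD f (p (i+1)) x^2 - DD f (p i) x^2)*Δ/(2*σ^2)
      = (DD f (p n) x^2 - DD f (p 0) x^2)*(Δ/(2*σ^2)) := by
    have h3 : ∀ i : ℕ, (DD f (p (i+1)) x^2 - DD f (p i) x^2)*Δ/(2*σ^2)
        = (fun j => DD f (p j) x^2 * (Δ/(2*σ^2))) (i+1)
          - (fun j => DD f (p j) x^2 * (Δ/(2*σ^2))) i := by
      intro i; simp only; ring
    calc ∑ i ∈ Finset.range n, (DD f (p (i+1)) x^2 - DD f (p i) x^2)*Δ/(2*σ^2)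
        = ∑ i ∈ Finset.range n, ((fun j => DD f (p j) x^2 * (Δ/(2*σ^2))) (i+1)
          - (fun j => DD f (p j) x^2 * (Δ/(2*σ^2))) i) := by
          apply Finset.sum_congr rfl
          intro i _
          exact h3 i
      _ = DD f (p n) x^2 * (Δ/(2*σ^2)) - DD f (p 0) x^2 * (Δ/(2*σ^2)) :=
          Finset.sum_range_sub (fun j => DD f (p j) x^2 * (Δ/(2*σ^2))) n
      _ = _ := by ring
  have sum_le : ft f σ x - ft f tt x ≤
      (∑ i ∈ Finset.range n, DD f (p i) x^2*Δ/(2*(p (i+1))^2)) + Δ*K := by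
    rw [sum_eq]
    have h3 := Finset.sum_le_sum term_le
    rw [Finset.sum_add_distrib, Finset.sum_add_distrib, tele, Finset.sum_const,
      Finset.card_range, hp0, hpn] at h3
    have h4 : (DD f tt x^2 - DD f σ x^2)*(Δ/(2*σ^2)) ≤ DD f tt x^2*(Δ/(2*σ^2)) := by
      have h5 : 0 ≤ DD f σ x^2 := sq_nonneg _
      have h6 : 0 ≤ Δ/(2*σ^2) := by positivity
      nlinarith
    have h7 : (n:ℝ) • (DD f tt x^2*Δ^2/(2*σ^3)) = (n:ℝ) * (DD f tt x^2*Δ^2/(2*σ^3)) := by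
      simp [smul_eq_mul]
    have h8 : (n:ℝ) * (DD f tt x^2*Δ^2/(2*σ^3)) = (tt-σ)*(DD f tt x^2*Δ/(2*σ^3)) := by
      have : (n:ℝ) * Δ = tt - σ := by
        rw [hΔdef]; field_simp
      calc (n:ℝ) * (DD f tt x^2*Δ^2/(2*σ^3)) = ((n:ℝ)*Δ) * (DD f tt x^2*Δ/(2*σ^3)) := by
            ring
        _ = (tt-σ)*(DD f tt x^2*Δ/(2*σ^3)) := by rw [this]
    have h9 : Δ*K = DD f tt x^2*(Δ/(2*σ^2)) + (tt-σ)*(DD f tt x^2*Δ/(2*σ^3)) := by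
      rw [hK]; ring
    have h10 : (n • (DD f tt x^2*Δ^2/(2*σ^3)) : ℝ) = (n:ℝ) * (DD f tt x^2*Δ^2/(2*σ^3)) := by
      simp
    linarith [h3, h4, h8, h9.le, h9.symm.le, h10.le, h10.symm.le]
  -- pass to lintegral
  have int_ge : ∀ i ∈ Finset.range n,
      ENNReal.ofReal (DD f (p i) x^2*Δ/(2*(p (i+1))^2))
        ≤ ∫⁻ s in Set.Ioc (p i) (p (i+1)), g s := by
    intro i _
    set c : ℝ := DD f (p i) x^2/(2*(p (i+1))^2) with hc
    have hc0 : 0 ≤ c := by positivity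
    have hpt : ∀ s ∈ Set.Ioc (p i) (p (i+1)), ENNReal.ofReal c ≤ g s := by
      intro s hs'
      have hsp : 0 < s := (hppos i).trans hs'.1
      have hDs : DD f (p i) x ≤ DD f s x := DD_mono f x hC (hppos i) hs'.1
      have hD2 : DD f (p i) x^2 ≤ DD f s x^2 := by
        nlinarith [DD_nonneg f x hC (hppos i)]
      have hs2 : 2*s^2 ≤ 2*(p (i+1))^2 := by nlinarith [hs'.2, hsp]
      apply ENNReal.ofReal_le_ofReal
      rw [hc]
      exact div_le_div₀ (by positivity) hD2 (by positivity) hs2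
    calc ENNReal.ofReal (DD f (p i) x^2*Δ/(2*(p (i+1))^2))
        = ENNReal.ofReal c * volume (Set.Ioc (p i) (p (i+1))) := by
          rw [Real.volume_Ioc, ← hΔeq i, ← ENNReal.ofReal_mul hc0]
          congr 1
          rw [hc]; ring
      _ = ∫⁻ _ in Set.Ioc (p i) (p (i+1)), ENNReal.ofReal c := by
          rw [setLIntegral_const]
      _ ≤ ∫⁻ s in Set.Ioc (p i) (p (i+1)), g s := by
          rw [← lintegral_indicator measurableSet_Ioc, ← lintegral_indicator measurableSet_Ioc]
          apply lintegral_mono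
          intro s
          by_cases hmem : s ∈ Set.Ioc (p i) (p (i+1))
          · simpa [Set.indicator_of_mem hmem] using hpt s hmem
          · simp [Set.indicator_of_notMem hmem]
  have int_sum : ∑ i ∈ Finset.range n, ∫⁻ s in Set.Ioc (p i) (p (i+1)), g s
      ≤ ∫⁻ s in Set.Ioc σ tt, g s := by
    have key : ∀ k : ℕ, k ≤ n →
        ∑ i ∈ Finset.range k, ∫⁻ s in Set.Ioc (p i) (p (i+1)), g s
          ≤ ∫⁻ s in Set.Ioc σ (p k), g s := by
      intro k
      induction k with
      | zero => intro _; simp [hp0]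
      | succ k ih =>
        intro hk
        have hk' : k ≤ n := Nat.le_of_succ_le hk
        have hmem : Set.Ioc σ (p (k+1)) = Set.Ioc σ (p k) ∪ Set.Ioc (p k) (p (k+1)) :=
          (Set.Ioc_union_Ioc_eq_Ioc (hpσ k) (hpmono k).le).symm
        rw [Finset.sum_range_succ, hmem]
        have hres : volume.restrict (Set.Ioc σ (p k) ∪ Set.Ioc (p k) (p (k+1)))
            = volume.restrict (Set.Ioc σ (p k)) + volume.restrict (Set.Ioc (p k) (p (k+1))) :=
          Measure.restrict_union (Set.Ioc_disjoint_Ioc_of_le le_rfl) measurableSet_Ioc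
        rw [hres, lintegral_add_measure]
        exact add_le_add (ih hk') le_rfl
    have h := key n le_rfl
    rwa [hpn] at h
  -- combine
  have hlow_nonneg : ∀ i ∈ Finset.range n, 0 ≤ DD f (p i) x^2*Δ/(2*(p (i+1))^2) := by
    intro i _
    have := hΔp
    positivity
  have hΔK : Δ*K ≤ (ρ:ℝ) := by
    have h1 : (tt-σ)*K < (n:ℝ)*(ρ:ℝ) := by
      rw [div_lt_iff₀ hρR] at hn
      linarith
    rw [hΔdef, div_mul_eq_mul_div, div_le_iff₀ hnR]
    nlinarith
  calc ENNReal.ofReal (ft f σ x - ft f tt x)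
      ≤ ENNReal.ofReal ((∑ i ∈ Finset.range n, DD f (p i) x^2*Δ/(2*(p (i+1))^2)) + Δ*K) :=
        ENNReal.ofReal_le_ofReal sum_le
    _ ≤ ENNReal.ofReal (∑ i ∈ Finset.range n, DD f (p i) x^2*Δ/(2*(p (i+1))^2))
        + ENNReal.ofReal (Δ*K) := ENNReal.ofReal_add_le
    _ ≤ (∑ i ∈ Finset.range n, ∫⁻ s in Set.Ioc (p i) (p (i+1)), g s) + (ρ:ℝ≥0∞) := by
        apply add_le_add
        · rw [ENNReal.ofReal_sum_of_nonneg hlow_nonneg]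
          exact Finset.sum_le_sum int_ge
        · calc ENNReal.ofReal (Δ*K) ≤ ENNReal.ofReal (ρ:ℝ) := ENNReal.ofReal_le_ofReal hΔK
            _ = (ρ:ℝ≥0∞) := ENNReal.ofReal_coe_nnreal
    _ ≤ (∫⁻ s in Set.Ioc σ tt, g s) + (ρ:ℝ≥0∞) := add_le_add_left int_sum _

end Darboux
end S4

namespace S4
section Main
variable {X : Type*} [MetricSpace X]

set_option maxHeartbeats 1000000 in
lemma main_bound (hX : IsLengthSpace X) (f : X × X → ℝ) (hlsc : LowerSemicontinuous f)
    {C : ℝ} (hC : ∀ p, C ≤ f p)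
    (hrev : ∀ a b c : X, f (a, b) + f (b, c) ≤ f (a, c))
    (x : X) {t : ℝ} (ht : 0 < t) :
    ENNReal.ofReal (ft f 0 x - ft f t x) ≤
      (1 / 2 : ℝ≥0∞) * ∫⁻ s in Set.Ioc (0 : ℝ) t,
        (descSlope (fun z => ft f s z) x + tilt f x) ^ 2 := by
  set G : ℝ → ℝ≥0∞ := fun s => (descSlope (fun z => ft f s z) x + tilt f x) ^ 2 with hG
  have hhalf : ENNReal.ofReal ((1:ℝ)/2) = (1/2 : ℝ≥0∞) := by
    rw [ENNReal.ofReal_div_of_pos (by norm_num)]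
    norm_num
  have slope : ∀ s : ℝ, 0 < s →
      ENNReal.ofReal (DD f s x / s) ≤ descSlope (fun z => ft f s z) x + tilt f x := by
    intro s hs
    apply ENNReal.le_of_forall_pos_le_add
    intro ρ hρ _
    have hρR : (0:ℝ) < (ρ:ℝ) := hρ
    have hθ : 0 < s * (ρ:ℝ) := mul_pos hs hρR
    have h1 := slope_bound_core f x hX hC hrev hs hθ
    have h2 : DD f s x / s = (DD f s x - s*(ρ:ℝ))/s + (s*(ρ:ℝ))/s := by
      field_simp
      ring
    have h3 : ENNReal.ofReal ((s*(ρ:ℝ))/s) = (ρ:ℝ≥0∞) := by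
      have h4 : (s*(ρ:ℝ))/s = (ρ:ℝ) := by
        field_simp
      rw [h4, ENNReal.ofReal_coe_nnreal]
    calc ENNReal.ofReal (DD f s x / s)
        ≤ ENNReal.ofReal ((DD f s x - s*(ρ:ℝ))/s) + ENNReal.ofReal ((s*(ρ:ℝ))/s) := by
          rw [h2]; exact ENNReal.ofReal_add_le
      _ ≤ (descSlope (fun z => ft f s z) x + tilt f x) + (ρ:ℝ≥0∞) := add_le_add h1 h3.le
  have hpt : ∀ s : ℝ, 0 < s →
      ENNReal.ofReal (DD f s x^2/(2*s^2)) ≤ (1/2 : ℝ≥0∞) * G s := by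
    intro s hs
    have hDs := DD_nonneg f x hC hs
    have hds : 0 ≤ DD f s x / s := div_nonneg hDs hs.le
    have hs' : (s:ℝ) ≠ 0 := hs.ne'
    have hid : DD f s x^2/(2*s^2) = (DD f s x/s)^2 * (1/2) := by
      rw [div_pow, div_mul_div_comm, mul_one, mul_comm (s^2) 2]
    calc ENNReal.ofReal (DD f s x^2/(2*s^2))
        = ENNReal.ofReal ((DD f s x/s)^2 * (1/2)) := by rw [hid]
      _ = ENNReal.ofReal ((DD f s x/s)^2) * ENNReal.ofReal ((1:ℝ)/2) :=
          ENNReal.ofReal_mul (by positivity)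
      _ = (ENNReal.ofReal (DD f s x/s))^2 * (1/2 : ℝ≥0∞) := by
          rw [ENNReal.ofReal_pow hds, hhalf]
      _ ≤ (descSlope (fun z => ft f s z) x + tilt f x)^2 * (1/2 : ℝ≥0∞) := by
          gcongr
          exact slope s hs
      _ = (1/2 : ℝ≥0∞) * G s := by
          rw [hG]; exact mul_comm _ _
  apply ENNReal.le_of_forall_pos_le_add
  intro ρ hρ _
  have hρR : (0:ℝ) < (ρ:ℝ) := hρ
  obtain ⟨σ₀, hσ₀, hcont⟩ := ft_cont0 f x hC hlsc hρR
  set σ := min σ₀ (t/2) with hσdef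
  have hσp : 0 < σ := lt_min hσ₀ (by linarith)
  have hσt : σ < t := (min_le_right _ _).trans_lt (by linarith)
  have hA : ft f 0 x - ft f σ x ≤ (ρ:ℝ) := hcont σ hσp (min_le_left _ _)
  have hB := darboux f x hC hσp hσt
  have step1 : (∫⁻ s in Set.Ioc σ t, ENNReal.ofReal (DD f s x^2/(2*s^2)))
      ≤ ∫⁻ s in Set.Ioc σ t, (1/2 : ℝ≥0∞) * G s := by
    rw [← lintegral_indicator measurableSet_Ioc, ← lintegral_indicator measurableSet_Ioc]
    apply lintegral_mono
    intro s
    by_cases hmem : s ∈ Set.Ioc σ t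
    · have hs : 0 < s := hσp.trans hmem.1
      simpa [Set.indicator_of_mem hmem] using hpt s hs
    · simp [Set.indicator_of_notMem hmem]
  have step2 : (∫⁻ s in Set.Ioc σ t, (1/2 : ℝ≥0∞) * G s)
      ≤ ∫⁻ s in Set.Ioc (0:ℝ) t, (1/2 : ℝ≥0∞) * G s :=
    lintegral_mono_set (Set.Ioc_subset_Ioc_left hσp.le)
  have step3 : (∫⁻ s in Set.Ioc (0:ℝ) t, (1/2 : ℝ≥0∞) * G s)
      = (1/2 : ℝ≥0∞) * ∫⁻ s in Set.Ioc (0:ℝ) t, G s :=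
    lintegral_const_mul' _ _ (by norm_num)
  have hsub : ft f 0 x - ft f t x = (ft f 0 x - ft f σ x) + (ft f σ x - ft f t x) := by ring
  calc ENNReal.ofReal (ft f 0 x - ft f t x)
      ≤ ENNReal.ofReal (ft f 0 x - ft f σ x) + ENNReal.ofReal (ft f σ x - ft f t x) := by
        rw [hsub]; exact ENNReal.ofReal_add_le
    _ ≤ (ρ:ℝ≥0∞) + ((1/2 : ℝ≥0∞) * ∫⁻ s in Set.Ioc (0:ℝ) t, G s) := by
        apply add_le_add
        · calc ENNReal.ofReal (ft f 0 x - ft f σ x) ≤ ENNReal.ofReal (ρ:ℝ) :=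
              ENNReal.ofReal_le_ofReal hA
            _ = (ρ:ℝ≥0∞) := ENNReal.ofReal_coe_nnreal
        · exact hB.trans (step1.trans (step2.trans step3.le))
    _ = ((1/2 : ℝ≥0∞) * ∫⁻ s in Set.Ioc (0:ℝ) t, G s) + (ρ:ℝ≥0∞) := add_comm _ _

end Main
end S4


/-- For every `x ∈ X` and `t ≥ 0`:
`0 ≤ f_0(x) - f_t(x) ≤ (1/2) ∫₀ᵗ (|∂⁻ f_s|(x) + tilt(f)(x))² ds`; in particular
`|f_0(x) - f_t(x)|` is bounded by the right-hand side. -/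
theorem statement4 [CompleteSpace X] (hX : IsLengthSpace X)
    (f : X × X → ℝ) (hlsc : LowerSemicontinuous f)
    (hbdd : ∃ C : ℝ, ∀ p : X × X, C ≤ f p)
    (hrev : ∀ x y z : X, f (x, y) + f (y, z) ≤ f (x, z))
    (x : X) (t : ℝ) (ht : 0 ≤ t) :
    ft f t x ≤ ft f 0 x ∧
    ENNReal.ofReal (ft f 0 x - ft f t x) ≤
      (1 / 2 : ℝ≥0∞) * ∫⁻ s in Set.Ioc (0 : ℝ) t,
        (descSlope (fun z => ft f s z) x + tilt f x) ^ 2 ∧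
    ENNReal.ofReal |ft f 0 x - ft f t x| ≤
      (1 / 2 : ℝ≥0∞) * ∫⁻ s in Set.Ioc (0 : ℝ) t,
        (descSlope (fun z => ft f s z) x + tilt f x) ^ 2 := by
  obtain ⟨C, hC⟩ := hbdd
  rcases ht.eq_or_lt with h0 | htpos
  · subst h0
    refine ⟨le_rfl, ?_, ?_⟩ <;> simp
  · have h1 : ft f t x ≤ ft f 0 x := S4.ft_le_ft_zero f x hC htpos
    have h2 := S4.main_bound hX f hlsc hC (fun a b c => hrev a b c) x htpos
    exact ⟨h1, h2, by
      rw [abs_of_nonneg (by linarith : (0:ℝ) ≤ ft f 0 x - ft f t x)]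
      exact h2⟩
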